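/- With X = ω(u, σ) as above, a = 000..., f_0 ≡ a, and F = {σ, f_0}, the system (X, F) is Hausdorff metric distributionally chaotic: there is an uncountable set S ⊆ X such that for any distinct x, y ∈ S, limsup_{n→∞} (1/n)·#{0 ≤ i ≤ n−1 : d_H(F^i(x), F^i(y)) < t} = 1 for all t > 0, and liminf_{n→∞} (1/n)·#{0 ≤ i ≤ n−1 : d_H(F^i(x), F^i(y)) < 1} = 0. -/

import Mathlib

open Set Metric Filter TopologicalSpace

/-- The set of all `n`-fold compositions of members of `F = {f 0, …, f (m-1)}` applied to `x`. -/
def iterSet {X : Type*} {m : ℕ} (f : Fin m → X → X) : ℕ → X → Set X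
  | 0, x => {x}
  | n + 1, x => ⋃ i, iterSet f n (f i x)

/-- The words `A_n` over the alphabet `{0,1}` (`false = 0`, `true = 1`):
`A₁ = 10111` and `A_{n+1} = A_n O_n A_n I_n A_n`, where `O_n` (resp. `I_n`) is the constant-`0`
(resp. constant-`1`) word of the same length as `A_n`. (`Aword 0` is a dummy value.) -/
def Aword : ℕ → List Bool
  | 0 => []
  | 1 => [true, false, true, true, true]
  | n + 2 =>
      Aword (n + 1) ++ List.replicate (Aword (n + 1)).length false ++ Aword (n + 1)
        ++ List.replicate (Aword (n + 1)).length true ++ Aword (n + 1)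
def Sig2 : Type := ℕ → Bool

noncomputable def sdist (a b : Sig2) : ℝ :=
  ∑' i : ℕ, (if a i = b i then (0 : ℝ) else 1) / 2 ^ i

lemma sdist_term_nonneg (a b : Sig2) (i : ℕ) :
    0 ≤ (if a i = b i then (0 : ℝ) else 1) / 2 ^ i := by
  apply div_nonneg _ (by positivity)
  split <;> norm_num

lemma sdist_summable (a b : Sig2) :
    Summable fun i : ℕ => (if a i = b i then (0 : ℝ) else 1) / 2 ^ i := by
  refine Summable.of_nonneg_of_le (sdist_term_nonneg a b) (fun i => ?_)
    summable_geometric_two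
  rw [one_div, inv_pow, ← one_div]
  gcongr
  split <;> norm_num

noncomputable instance : MetricSpace Sig2 where
  dist := sdist
  dist_self a := by
    unfold sdist; simp
  dist_comm a b := by
    refine tsum_congr fun i => ?_
    by_cases h : a i = b i
    · rw [if_pos h, if_pos h.symm]
    · rw [if_neg h, if_neg fun h' => h h'.symm]
  dist_triangle a b c := by
    have key : ∀ i : ℕ, (if a i = c i then (0 : ℝ) else 1) / 2 ^ i ≤
        (if a i = b i then (0 : ℝ) else 1) / 2 ^ i
          + (if b i = c i then (0 : ℝ) else 1) / 2 ^ i := by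
      intro i
      by_cases hac : a i = c i
      · rw [if_pos hac, zero_div]
        exact add_nonneg (sdist_term_nonneg a b i) (sdist_term_nonneg b c i)
      · have h : ¬ a i = b i ∨ ¬ b i = c i := by
          by_contra hcon
          push_neg at hcon
          exact hac (hcon.1.trans hcon.2)
        rcases h with h | h
        · rw [if_neg hac, if_neg h]
          have := sdist_term_nonneg b c i
          linarith
        · rw [if_neg hac, if_neg h]
          have := sdist_term_nonneg a b i
          linarith
    calc sdist a c ≤ ∑' i : ℕ, ((if a i = b i then (0 : ℝ) else 1) / 2 ^ i
          + (if b i = c i then (0 : ℝ) else 1) / 2 ^ i) :=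
        Summable.tsum_le_tsum key (sdist_summable a c) ((sdist_summable a b).add (sdist_summable b c))
      _ = sdist a b + sdist b c := Summable.tsum_add (sdist_summable a b) (sdist_summable b c)
  eq_of_dist_eq_zero := by
    intro a b h
    funext i
    by_contra hne
    have hle := Summable.le_tsum (sdist_summable a b) i fun j _ => sdist_term_nonneg a b j
    rw [show (∑' i : ℕ, (if a i = b i then (0 : ℝ) else 1) / 2 ^ i) = 0 from h] at hle
    rw [if_neg hne] at hle
    have : (0 : ℝ) < 1 / 2 ^ i := by positivity
    exact absurd hle (not_le.mpr this)

/-- The shift map `σ` on `Σ₂`. -/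
def shiftS (x : Sig2) : Sig2 := fun n => x (n + 1)

/-- The ω-limit set of the point `u` under the shift `σ`. -/
def omegaLim (u : Sig2) : Set Sig2 :=
  ⋂ n : ℕ, closure {y : Sig2 | ∃ k : ℕ, n ≤ k ∧ y = shiftS^[k] u}

/-- The constant-`0` sequence `a = 000⋯`. -/
def aseq : Sig2 := fun _ => false

/-- The constant-`1` sequence `b = 111⋯`. -/
def bseq : Sig2 := fun _ => true

/-- The sequence `u` extending all the words `A_n`, viewed as a point of `Σ₂`. -/
def useqS : Sig2 := fun i => (Aword (i + 1)).getD i false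

/-- The multiple mapping `F = {σ, f₀}` where `f₀ ≡ a` is constant. -/
def Fsig : Fin 2 → Sig2 → Sig2 := ![shiftS, fun _ => aseq]


/-! ### Auxiliary development -/

section Aux

/-- getD of replicate -/
lemma getD_replicate' {n i : ℕ} {b : Bool} (h : i < n) :
    (List.replicate n b).getD i false = b := by
  rw [List.getD_eq_getElem?_getD]; simp [List.getElem?_replicate, h]

lemma Aword_length : ∀ n, 1 ≤ n → (Aword n).length = 5 ^ n := by
  intro n
  induction n with
  | zero => omega
  | succ m ih =>
    intro _
    match m, ih with
    | 0, _ => simp [Aword]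
    | (k+1), ih =>
      have h := ih (by omega)
      simp [Aword, h]
      ring

lemma Aword_succ_eq (n : ℕ) (hn : 1 ≤ n) :
    Aword (n + 1) = Aword n ++ List.replicate (5 ^ n) false ++ Aword n
      ++ List.replicate (5 ^ n) true ++ Aword n := by
  match n, hn with
  | (k+1), _ =>
    rw [show Aword (k+1+1) = Aword (k + 1) ++ List.replicate (Aword (k + 1)).length false
        ++ Aword (k + 1) ++ List.replicate (Aword (k + 1)).length true ++ Aword (k + 1) from rfl,
      Aword_length (k+1) (by omega)]

lemma Aword_prefix_succ (n : ℕ) : Aword n <+: Aword (n + 1) := by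
  cases n with
  | zero => exact List.nil_prefix
  | succ m =>
    rw [Aword_succ_eq (m+1) (by omega)]
    exact ((List.prefix_append _ _).trans (List.prefix_append _ _)).trans
      ((List.prefix_append _ _).trans (List.prefix_append _ _))

lemma Aword_suffix_succ (n : ℕ) : Aword n <:+ Aword (n + 1) := by
  cases n with
  | zero => exact List.nil_suffix
  | succ m =>
    rw [Aword_succ_eq (m+1) (by omega)]
    exact List.suffix_append _ _

lemma Aword_prefix_le {n m : ℕ} (h : n ≤ m) : Aword n <+: Aword m := by
  induction m with
  | zero => have : n = 0 := by omega
            subst this; exact List.prefix_refl _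
  | succ k ih =>
    rcases Nat.lt_or_ge n (k+1) with h' | h'
    · exact (ih (by omega)).trans (Aword_prefix_succ k)
    · have : n = k + 1 := by omega
      subst this; exact List.prefix_refl _

lemma Aword_suffix_le {n m : ℕ} (h : n ≤ m) : Aword n <:+ Aword m := by
  induction m with
  | zero => have : n = 0 := by omega
            subst this; exact List.suffix_refl _
  | succ k ih =>
    rcases Nat.lt_or_ge n (k+1) with h' | h'
    · exact (ih (by omega)).trans (Aword_suffix_succ k)
    · have : n = k + 1 := by omega
      subst this; exact List.suffix_refl _

lemma getD_of_prefix {l₁ l₂ : List Bool} (h : l₁ <+: l₂) {i : ℕ} (hi : i < l₁.length) :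
    l₂.getD i false = l₁.getD i false := by
  obtain ⟨t, rfl⟩ := h
  exact List.getD_append _ _ _ _ hi

lemma useqS_eq {M i : ℕ} (hM : 1 ≤ M) (hi : i < 5 ^ M) : useqS i = (Aword M).getD i false := by
  have h1 : i < (Aword (i+1)).length := by
    rw [Aword_length (i+1) (by omega)]
    calc i < 5 ^ i := Nat.lt_pow_self (by norm_num)
    _ ≤ 5 ^ (i+1) := Nat.pow_le_pow_right (by norm_num) (by omega)
  have h2 : i < (Aword M).length := by rw [Aword_length M hM]; exact hi
  rcases Nat.le_total (i+1) M with h | h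
  · rw [useqS, ← getD_of_prefix (Aword_prefix_le h) h1]
  · rw [useqS, getD_of_prefix (Aword_prefix_le h) h2]

end Aux

section Metric2

lemma sdist_eq_dist (a b : Sig2) : dist a b = sdist a b := rfl

lemma sdist_le_two (a b : Sig2) : dist a b ≤ 2 := by
  rw [sdist_eq_dist, sdist]
  have h : (∑' i : ℕ, (if a i = b i then (0:ℝ) else 1) / 2 ^ i) ≤ ∑' i : ℕ, (1/2:ℝ) ^ i := by
    refine Summable.tsum_le_tsum (fun i => ?_) (sdist_summable a b) summable_geometric_two
    rw [one_div, inv_pow, ← one_div]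
    gcongr
    split <;> norm_num
  calc _ ≤ _ := h
  _ = 2 := tsum_geometric_two

set_option maxHeartbeats 1000000 in
lemma sdist_le_of_agree {a b : Sig2} {L : ℕ} (h : ∀ i < L, a i = b i) :
    dist a b ≤ 2 * (1 / 2) ^ L := by
  rw [sdist_eq_dist, sdist]
  have hsplit := Summable.sum_add_tsum_nat_add (f := fun i => (if a i = b i then (0:ℝ) else 1) / 2 ^ i)
    L (sdist_summable a b)
  rw [← hsplit]
  have h1 : (∑ i ∈ Finset.range L, (if a i = b i then (0:ℝ) else 1) / 2 ^ i) = 0 := by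
    apply Finset.sum_eq_zero
    intro i hi
    rw [if_pos (h i (Finset.mem_range.mp hi)), zero_div]
  rw [h1, zero_add]
  have hs : Summable fun i : ℕ => (if a (i + L) = b (i + L) then (0:ℝ) else 1) / 2 ^ (i + L) :=
    (summable_nat_add_iff L).mpr (sdist_summable a b)
  have h2 : (∑' i : ℕ, (if a (i + L) = b (i + L) then (0:ℝ) else 1) / 2 ^ (i + L))
      ≤ ∑' i : ℕ, (1/2:ℝ) ^ L * (1/2) ^ i := by
    refine Summable.tsum_le_tsum (fun i => ?_) hs (Summable.mul_left _ summable_geometric_two)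
    have he : ((1:ℝ)/2) ^ L * (1/2) ^ i = 1 / 2 ^ (i + L) := by
      rw [div_pow, div_pow, one_pow, one_pow, div_mul_div_comm, one_mul, ← pow_add]
      ring_nf
    rw [he]
    gcongr
    split <;> norm_num
  calc _ ≤ _ := h2
  _ = (1/2:ℝ)^L * ∑' i : ℕ, (1/2:ℝ)^i := tsum_mul_left
  _ = 2 * (1/2)^L := by rw [tsum_geometric_two]; ring

lemma one_le_sdist {a b : Sig2} (h : a 0 ≠ b 0) : 1 ≤ dist a b := by
  rw [sdist_eq_dist, sdist]
  have := Summable.le_tsum (sdist_summable a b) 0 (fun j _ => sdist_term_nonneg a b j)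
  simpa [if_neg h] using this

lemma shiftS_iterate (k : ℕ) : ∀ (x : Sig2) (n : ℕ), shiftS^[k] x n = x (n + k) := by
  induction k with
  | zero => intro x n; simp
  | succ m ih =>
    intro x n
    rw [Function.iterate_succ_apply, ih (shiftS x) n]
    show x (n + m + 1) = x (n + (m + 1))
    ring_nf

end Metric2

section IterSet

lemma shiftS_aseq : shiftS aseq = aseq := rfl

lemma iUnion_fin_two (f : Fin 2 → Set Sig2) : (⋃ i : Fin 2, f i) = f 0 ∪ f 1 := by
  ext z
  simp only [Set.mem_iUnion, Fin.exists_fin_two, Set.mem_union]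

lemma iterSet_aseq (n : ℕ) : iterSet Fsig n aseq = {aseq} := by
  induction n with
  | zero => rfl
  | succ m ih =>
    show (⋃ i : Fin 2, iterSet Fsig m (Fsig i aseq)) = {aseq}
    rw [iUnion_fin_two]
    have h0 : Fsig 0 aseq = aseq := rfl
    have h1 : Fsig 1 aseq = aseq := rfl
    rw [h0, h1, ih, Set.union_self]

lemma iterSet_eq : ∀ (n : ℕ), 1 ≤ n → ∀ (x : Sig2),
    iterSet Fsig n x = {shiftS^[n] x, aseq} := by
  intro n
  induction n with
  | zero => omega
  | succ m ih =>
    intro _ x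
    show (⋃ i : Fin 2, iterSet Fsig m (Fsig i x)) = _
    rw [iUnion_fin_two]
    have h0 : Fsig 0 x = shiftS x := rfl
    have h1 : Fsig 1 x = aseq := rfl
    rw [h0, h1, iterSet_aseq]
    rcases Nat.eq_zero_or_pos m with rfl | hm
    · show ({shiftS x} : Set Sig2) ∪ {aseq} = _
      rw [Set.singleton_union]
      rfl
    · rw [ih hm (shiftS x), ← Function.iterate_succ_apply]
      ext z
      simp only [Set.mem_union, Set.mem_insert_iff, Set.mem_singleton_iff]
      tauto

end IterSet

section Haus

open Metric EMetric

lemma one_le_dist_aseq {p : Sig2} (hp : p 0 = true) : 1 ≤ dist p aseq :=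
  one_le_sdist (by simp [hp, aseq])

lemma pair_bounded (p q : Sig2) : EMetric.hausdorffEdist ({p, aseq} : Set Sig2) {q, aseq} ≠ ⊤ :=
  Metric.hausdorffEdist_ne_top_of_nonempty_of_bounded (by simp) (by simp)
    ((Set.Finite.insert p (Set.finite_singleton aseq)).isBounded)
    ((Set.Finite.insert q (Set.finite_singleton aseq)).isBounded)

lemma hd_le_dist (p q : Sig2) :
    Metric.hausdorffDist ({p, aseq} : Set Sig2) {q, aseq} ≤ dist p q := by
  apply Metric.hausdorffDist_le_of_mem_dist dist_nonneg
  · rintro z (rfl | rfl)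
    · exact ⟨q, by simp, le_rfl⟩
    · exact ⟨aseq, by simp, by simpa using dist_nonneg⟩
  · rintro z (rfl | rfl)
    · exact ⟨p, by simp, by rw [dist_comm]⟩
    · exact ⟨aseq, by simp, by simpa using dist_nonneg⟩

lemma one_le_hd {p q : Sig2} (h : p 0 ≠ q 0) :
    1 ≤ Metric.hausdorffDist ({p, aseq} : Set Sig2) {q, aseq} := by
  by_contra hlt
  push_neg at hlt
  cases hp : p 0
  · -- p 0 = false, hence q 0 = true
    have hq : q 0 = true := by
      cases hq' : q 0
      · exact absurd (hp.trans hq'.symm) h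
      · rfl
    have hlt' : Metric.hausdorffDist ({q, aseq} : Set Sig2) {p, aseq} < 1 := by
      rwa [Metric.hausdorffDist_comm]
    obtain ⟨z, hz, hzd⟩ := Metric.exists_dist_lt_of_hausdorffDist_lt (Set.mem_insert q _)
      hlt' (pair_bounded q p)
    rcases hz with rfl | rfl
    · exact absurd hzd (not_lt.mpr (one_le_sdist h.symm))
    · exact absurd hzd (not_lt.mpr (one_le_dist_aseq hq))
  · obtain ⟨z, hz, hzd⟩ := Metric.exists_dist_lt_of_hausdorffDist_lt (Set.mem_insert p _)
      hlt (pair_bounded p q)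
    rcases hz with rfl | rfl
    · exact absurd hzd (not_lt.mpr (one_le_sdist h))
    · exact absurd hzd (not_lt.mpr (one_le_dist_aseq hp))

end Haus

section Construction

/-- the choice of the `k`-th block of the point coded by `e` -/
def mchoice (e : ℕ → Bool) (k : ℕ) : Bool :=
  if k % 2 = 0 then true else e (Nat.unpair (k / 2)).1

/-- the `k`-th block: `O_k A_k I_k A_k` if the choice is `true`, else `I_k A_k`
(here with `A_k = Aword (2^k)`). -/
def Eblk (c : Bool) (k : ℕ) : List Bool :=
  if c then
    List.replicate (5 ^ 2 ^ k) false ++ (Aword (2 ^ k) ++ (List.replicate (5 ^ 2 ^ k) true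
      ++ Aword (2 ^ k)))
  else List.replicate (5 ^ 2 ^ k) true ++ Aword (2 ^ k)

/-- the concatenation `E_1 E_2 ⋯ E_k`. -/
def Wpref (e : ℕ → Bool) : ℕ → List Bool
  | 0 => []
  | k + 1 => Wpref e k ++ Eblk (mchoice e (k + 1)) (k + 1)

/-- the point of `Σ₂` coded by `e`. -/
def xseq (e : ℕ → Bool) : Sig2 := fun i => (Wpref e (i + 1)).getD i false

lemma Eblk_length (c : Bool) (k : ℕ) (hk : 1 ≤ k) :
    (Eblk c k).length = (if c then 4 else 2) * 5 ^ 2 ^ k := by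
  have hA : (Aword (2 ^ k)).length = 5 ^ 2 ^ k := Aword_length _ (Nat.one_le_two_pow)
  cases c <;> simp [Eblk, hA] <;> ring

lemma Eblk_length_lower (c : Bool) (k : ℕ) (hk : 1 ≤ k) :
    2 * 5 ^ 2 ^ k ≤ (Eblk c k).length := by
  rw [Eblk_length c k hk]
  cases c <;> simp <;> omega

lemma Eblk_length_upper (c : Bool) (k : ℕ) (hk : 1 ≤ k) :
    (Eblk c k).length ≤ 4 * 5 ^ 2 ^ k := by
  rw [Eblk_length c k hk]
  cases c <;> simp <;> omega

lemma Wpref_length_le (e : ℕ → Bool) (k : ℕ) : (Wpref e k).length ≤ 5 ^ (2 ^ k + 1) := by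
  induction k with
  | zero => simp [Wpref]
  | succ m ih =>
    rw [Wpref]
    rw [List.length_append]
    have h1 : (Eblk (mchoice e (m+1)) (m+1)).length ≤ 4 * 5 ^ 2 ^ (m+1) :=
      Eblk_length_upper _ _ (by omega)
    have h2 : (5:ℕ) ^ (2 ^ m + 1) ≤ 5 ^ 2 ^ (m+1) := by
      apply Nat.pow_le_pow_right (by norm_num)
      have : 1 ≤ 2 ^ m := Nat.one_le_two_pow
      rw [pow_succ]
      omega
    have h3 : (5:ℕ) ^ (2 ^ (m+1) + 1) = 5 * 5 ^ 2 ^ (m+1) := by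
      rw [pow_succ]
      ring
    omega

lemma Wpref_prefix_succ (e : ℕ → Bool) (k : ℕ) : Wpref e k <+: Wpref e (k + 1) :=
  ⟨Eblk (mchoice e (k + 1)) (k + 1), rfl⟩

lemma Wpref_prefix_le (e : ℕ → Bool) {k m : ℕ} (h : k ≤ m) : Wpref e k <+: Wpref e m := by
  induction m with
  | zero => have : k = 0 := by omega
            subst this; exact List.prefix_refl _
  | succ j ih =>
    rcases Nat.lt_or_ge k (j+1) with h' | h'
    · exact (ih (by omega)).trans (Wpref_prefix_succ e j)
    · have : k = j + 1 := by omega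
      subst this; exact List.prefix_refl _

lemma Wpref_length_mono (e : ℕ → Bool) {k m : ℕ} (h : k ≤ m) :
    (Wpref e k).length ≤ (Wpref e m).length :=
  (Wpref_prefix_le e h).length_le

lemma lt_Wpref_length (e : ℕ → Bool) (k : ℕ) : k ≤ (Wpref e k).length := by
  induction k with
  | zero => simp
  | succ m ih =>
    rw [Wpref, List.length_append]
    have := Eblk_length_lower (mchoice e (m+1)) (m+1) (by omega)
    have h5 : 1 ≤ 5 ^ 2 ^ (m+1) := Nat.one_le_pow _ _ (by norm_num)
    omega

lemma xseq_eq (e : ℕ → Bool) {k i : ℕ} (hi : i < (Wpref e k).length) :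
    xseq e i = (Wpref e k).getD i false := by
  have hi' : i < (Wpref e (i+1)).length := lt_Wpref_length e (i+1)
  rcases Nat.le_total (i+1) k with h | h
  · rw [xseq, getD_of_prefix (Wpref_prefix_le e h) hi']
  · rw [xseq, ← getD_of_prefix (Wpref_prefix_le e h) hi]

lemma Wpref_suffix (e : ℕ → Bool) (k : ℕ) : Wpref e k <:+ Aword (2 ^ k + 1) := by
  induction k with
  | zero => exact List.nil_suffix
  | succ m ih =>
    have h1 : Wpref e m <:+ Aword (2 ^ (m+1)) := by
      refine ih.trans (Aword_suffix_le ?_)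
      have : 1 ≤ 2 ^ m := Nat.one_le_two_pow
      rw [pow_succ]
      omega
    obtain ⟨pre, hpre⟩ := h1
    rw [Aword_succ_eq (2 ^ (m+1)) Nat.one_le_two_pow]
    rw [Wpref]
    set M := 2 ^ (m+1) with hM
    cases hc : mchoice e (m+1) with
    | true =>
      refine ⟨pre, ?_⟩
      rw [Eblk, if_pos rfl]
      rw [← hpre]
      simp [List.append_assoc, hM]
    | false =>
      refine ⟨Aword M ++ List.replicate (5 ^ M) false ++ pre, ?_⟩
      rw [Eblk, if_neg (by simp)]
      rw [← hpre]
      simp [List.append_assoc, hM]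

lemma xseq_block (e : ℕ → Bool) (k i : ℕ)
    (h1 : (Wpref e k).length ≤ i) (h2 : i < (Wpref e k).length + 5 ^ 2 ^ (k + 1)) :
    xseq e i = !(mchoice e (k + 1)) := by
  set P := (Wpref e k).length with hP
  have hlen : i < (Wpref e (k+1)).length := by
    rw [Wpref, List.length_append]
    have := Eblk_length_lower (mchoice e (k+1)) (k+1) (by omega)
    omega
  rw [xseq_eq e hlen, Wpref, List.getD_append_right _ _ _ _ h1]
  cases hc : mchoice e (k+1) with
  | true =>
    rw [Eblk, if_pos rfl, List.getD_append _ _ _ _ (by rw [List.length_replicate]; omega)]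
    exact getD_replicate' (by omega)
  | false =>
    rw [Eblk, if_neg (by simp), List.getD_append _ _ _ _ (by rw [List.length_replicate]; omega)]
    exact getD_replicate' (by omega)

lemma mchoice_even (e : ℕ → Bool) {k : ℕ} (h : k % 2 = 0) : mchoice e k = true := by
  rw [mchoice, if_pos h]

lemma mchoice_odd (e : ℕ → Bool) (i l : ℕ) :
    mchoice e (2 * Nat.pair i l + 1) = e i := by
  rw [mchoice, if_neg (by omega)]
  have : (2 * Nat.pair i l + 1) / 2 = Nat.pair i l := by omega
  rw [this, Nat.unpair_pair]

end Construction

section OmegaMem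

lemma xseq_mem_omegaLim (e : ℕ → Bool) : xseq e ∈ omegaLim useqS := by
  rw [omegaLim]
  refine Set.mem_iInter.mpr fun n => ?_
  rw [Metric.mem_closure_iff]
  intro ε hε
  obtain ⟨L, hL⟩ : ∃ L : ℕ, 2 * (1/2:ℝ)^L < ε := by
    obtain ⟨L, hL⟩ := exists_pow_lt_of_lt_one (by positivity : (0:ℝ) < ε / 2)
      (by norm_num : (1/2:ℝ) < 1)
    exact ⟨L, by linarith⟩
  have hWlen : L ≤ (Wpref e L).length := lt_Wpref_length e L
  set W := Wpref e L with hW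
  set M := max (2 ^ L + 1) (n + W.length) with hMdef
  have hM1 : 2 ^ L + 1 ≤ M := le_max_left _ _
  have hM0 : 1 ≤ M := le_trans (Nat.le_add_left 1 (2 ^ L)) hM1
  have hMpow : M < 5 ^ M := Nat.lt_pow_self (by norm_num)
  have hsuf : W <:+ Aword M := (Wpref_suffix e L).trans (Aword_suffix_le hM1)
  obtain ⟨pre, hpre⟩ := hsuf
  have hlenM : (Aword M).length = 5 ^ M := Aword_length M hM0
  have hplen : pre.length + W.length = 5 ^ M := by
    rw [← hlenM, ← hpre, List.length_append]
  set p := pre.length with hp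
  have hpn : n ≤ p := by
    have h2 : n + W.length ≤ M := le_max_right _ _
    have h3 : n + W.length ≤ 5 ^ M := le_trans h2 hMpow.le
    omega
  refine ⟨shiftS^[p] useqS, ⟨p, hpn, rfl⟩, ?_⟩
  refine lt_of_le_of_lt (sdist_le_of_agree fun j hj => ?_) hL
  rw [shiftS_iterate]
  have h1 : xseq e j = W.getD j false := xseq_eq e (lt_of_lt_of_le hj hWlen)
  have h2 : useqS (j + p) = (Aword M).getD (j + p) false :=
    useqS_eq hM0 (by omega)
  rw [h1, h2, ← hpre, List.getD_append_right _ _ _ _ (by omega)]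
  congr 1
  omega

end OmegaMem

section Counting

lemma ncard_Iio' (n : ℕ) : (Set.Iio n).ncard = n := by
  rw [Set.ncard_eq_toFinset_card']; simp

lemma ncard_Ico' (a b : ℕ) : (Set.Ico a b).ncard = b - a := by
  rw [Set.ncard_eq_toFinset_card']; simp

lemma count_finite (n : ℕ) (P : ℕ → Prop) : {i : ℕ | i < n ∧ P i}.Finite :=
  (Set.finite_Iio n).subset fun _ hi => hi.1

lemma count_le (n : ℕ) (P : ℕ → Prop) : {i : ℕ | i < n ∧ P i}.ncard ≤ n := by
  calc {i : ℕ | i < n ∧ P i}.ncard ≤ (Set.Iio n).ncard :=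
        Set.ncard_le_ncard (fun _ hi => hi.1) (Set.finite_Iio n)
  _ = n := ncard_Iio' n

lemma ratio_nonneg (c n : ℕ) : (0:ℝ) ≤ (c:ℝ) / n := by positivity

lemma ratio_le_one (n : ℕ) (P : ℕ → Prop) : (({i : ℕ | i < n ∧ P i}).ncard : ℝ) / n ≤ 1 := by
  rcases Nat.eq_zero_or_pos n with rfl | hn
  · simp
  · rw [div_le_one (by exact_mod_cast hn)]
    exact_mod_cast count_le n P

end Counting

section Stages

lemma two_pow_le_q (k : ℕ) : k + 1 ≤ 5 ^ 2 ^ k :=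
  le_trans (Nat.lt_two_pow_self (n := k)) (le_trans (Nat.lt_pow_self (n := 2 ^ k) (by norm_num : 1 < 5)).le le_rfl)

lemma q_sq (k : ℕ) : (5:ℕ) ^ 2 ^ (k + 1) = 5 ^ 2 ^ k * 5 ^ 2 ^ k := by
  rw [← pow_add]
  congr 1
  rw [pow_succ]
  ring

lemma Wpref_le_5q (e : ℕ → Bool) (k : ℕ) : (Wpref e k).length ≤ 5 * 5 ^ 2 ^ k := by
  have h := Wpref_length_le e k
  rwa [pow_succ, Nat.mul_comm] at h

/-- On the common part of a shared all-`0` block, both sequences are `0`. -/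
lemma stage_zero (e : ℕ → Bool) (k i : ℕ) (hc : mchoice e (k+1) = true)
    (h1 : (Wpref e k).length ≤ i) (h2 : i < (Wpref e k).length + 5 ^ 2 ^ (k+1)) :
    xseq e i = false := by
  rw [xseq_block e k i h1 h2, hc]
  rfl

/-- On the common part of a block where the choices differ, the sequences differ. -/
lemma stage_far (e e' : ℕ → Bool) (k i : ℕ) (hc : mchoice e (k+1) ≠ mchoice e' (k+1))
    (h1 : (Wpref e k).length ≤ i) (h1' : (Wpref e' k).length ≤ i)
    (h2 : i < (Wpref e k).length + 5 ^ 2 ^ (k+1))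
    (h2' : i < (Wpref e' k).length + 5 ^ 2 ^ (k+1)) :
    xseq e i ≠ xseq e' i := by
  rw [xseq_block e k i h1 h2, xseq_block e' k i h1' h2']
  intro h
  exact hc (by
    cases hme : mchoice e (k+1) <;> cases hme' : mchoice e' (k+1) <;>
      rw [hme, hme'] at h <;> simp_all)

lemma xseq_injective : Function.Injective xseq := by
  intro e e' h
  by_contra hne
  obtain ⟨i₀, hi₀⟩ : ∃ i, e i ≠ e' i := by
    by_contra hc
    push_neg at hc
    exact hne (funext hc)
  set k := 2 * Nat.pair i₀ 1 with hk
  have hkpos : 1 ≤ k := by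
    have := Nat.right_le_pair i₀ 1
    omega
  have hcdiff : mchoice e (k + 1) ≠ mchoice e' (k + 1) := by
    rw [show k + 1 = 2 * Nat.pair i₀ 1 + 1 from rfl, mchoice_odd, mchoice_odd]
    exact hi₀
  set P := (Wpref e k).length
  set Q := (Wpref e' k).length
  have hPq : P ≤ 5 * 5 ^ 2 ^ k := Wpref_le_5q e k
  have hQq : Q ≤ 5 * 5 ^ 2 ^ k := Wpref_le_5q e' k
  have h6 : 5 * 5 ^ 2 ^ k < 5 ^ 2 ^ (k+1) := by
    rw [q_sq]
    have : 10 ≤ 5 ^ 2 ^ k := by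
      calc 10 ≤ 25 := by norm_num
      _ = 5 ^ 2 := by norm_num
      _ ≤ 5 ^ 2 ^ k := Nat.pow_le_pow_right (by norm_num) (by
          calc 2 = 2 ^ 1 := rfl
          _ ≤ 2 ^ k := Nat.pow_le_pow_right (by norm_num) hkpos)
    nlinarith
  have := stage_far e e' k (max P Q) hcdiff (le_max_left _ _) (le_max_right _ _)
    (by omega) (by omega)
  exact this (congrFun h _)

end Stages

section Freq

set_option maxHeartbeats 1000000 in
lemma freq_close (e e' : ℕ → Bool) {t ε : ℝ} (ht : 0 < t) (hε : 0 < ε) :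
    ∃ᶠ n in Filter.atTop, 1 - ε ≤
      ((({i : ℕ | i < n ∧ Metric.hausdorffDist (iterSet Fsig i (xseq e))
        (iterSet Fsig i (xseq e')) < t}).ncard : ℝ) / n) := by
  rw [Filter.frequently_atTop]
  intro N₀
  obtain ⟨L, hLt⟩ : ∃ L : ℕ, 2 * (1/2:ℝ)^L < t := by
    obtain ⟨L, hL⟩ := exists_pow_lt_of_lt_one (by positivity : (0:ℝ) < t / 2)
      (by norm_num : (1/2:ℝ) < 1)
    exact ⟨L, by linarith⟩
  set B := L + N₀ + ⌈10 / ε⌉₊ + 10 with hB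
  set k := 2 * B + 1 with hk
  set q := 5 ^ 2 ^ k with hq
  have hkq : k + 1 ≤ q := two_pow_le_q k
  have hBq : B ≤ q := by omega
  have hqm : (5:ℕ) ^ 2 ^ (k+1) = q * q := q_sq k
  set P := (Wpref e k).length with hP
  set Q := (Wpref e' k).length with hQ
  have hPq : P ≤ 5 * q := Wpref_le_5q e k
  have hQq : Q ≤ 5 * q := Wpref_le_5q e' k
  have hme : mchoice e (k+1) = true := mchoice_even e (by omega)
  have hme' : mchoice e' (k+1) = true := mchoice_even e' (by omega)
  have hP1 : 1 ≤ P := le_trans (by omega) (lt_Wpref_length e k)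
  set a := max P Q with ha
  set n := min P Q + q * q - L with hn
  have hq10 : 10 ≤ q := by omega
  have hqq : 10 * q ≤ q * q := Nat.mul_le_mul_right q hq10
  have hNn : N₀ ≤ n := by omega
  refine ⟨n, hNn, ?_⟩
  have hsub : Set.Ico a n ⊆ {i : ℕ | i < n ∧ Metric.hausdorffDist (iterSet Fsig i (xseq e))
      (iterSet Fsig i (xseq e')) < t} := by
    intro i hi
    obtain ⟨hai, hin⟩ := hi
    refine ⟨hin, ?_⟩
    have hi1 : 1 ≤ i := le_trans (le_trans hP1 (le_max_left P Q)) hai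
    rw [iterSet_eq i hi1 (xseq e), iterSet_eq i hi1 (xseq e')]
    refine lt_of_le_of_lt (le_trans (hd_le_dist _ _) (sdist_le_of_agree fun s hs => ?_)) hLt
    rw [shiftS_iterate, shiftS_iterate]
    have hxe : xseq e (s + i) = false :=
      stage_zero e k (s + i) hme (by omega) (by rw [hqm]; omega)
    have hxe' : xseq e' (s + i) = false :=
      stage_zero e' k (s + i) hme' (by omega) (by rw [hqm]; omega)
    rw [hxe, hxe']
  have hfin := count_finite n (fun i => Metric.hausdorffDist (iterSet Fsig i (xseq e))
      (iterSet Fsig i (xseq e')) < t)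
  have hcard : n - a ≤ ({i : ℕ | i < n ∧ Metric.hausdorffDist (iterSet Fsig i (xseq e))
      (iterSet Fsig i (xseq e')) < t}).ncard := by
    calc n - a = (Set.Ico a n).ncard := (ncard_Ico' a n).symm
    _ ≤ _ := Set.ncard_le_ncard hsub hfin
  have hn0 : 0 < n := by omega
  have hn0R : (0:ℝ) < (n:ℝ) := by exact_mod_cast hn0
  rw [le_div_iff₀ hn0R]
  have hc : ((n - a : ℕ) : ℝ) ≤ (({i : ℕ | i < n ∧ Metric.hausdorffDist
      (iterSet Fsig i (xseq e)) (iterSet Fsig i (xseq e')) < t}).ncard : ℝ) := by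
    exact_mod_cast hcard
  have han : a ≤ n := by omega
  have hcast : ((n - a : ℕ) : ℝ) = (n:ℝ) - (a:ℝ) := by
    rw [Nat.cast_sub han]
  have haε : (a:ℝ) ≤ ε * n := by
    have h5q : (a:ℝ) ≤ 5 * (q:ℝ) := by exact_mod_cast (by omega : a ≤ 5 * q)
    have hq2 : (q:ℝ) * q - q ≤ (n:ℝ) := by
      have h' : q * q - q ≤ n := by omega
      have h'' : ((q * q - q : ℕ) : ℝ) ≤ (n:ℝ) := by exact_mod_cast h'
      rwa [Nat.cast_sub (by simpa using Nat.mul_le_mul_right q (show 1 ≤ q by omega) : q ≤ q * q), Nat.cast_mul] at h''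
    have hceil : 10 / ε ≤ ((⌈10 / ε⌉₊ : ℕ) : ℝ) := Nat.le_ceil _
    have hcB : ((⌈10 / ε⌉₊ : ℕ) : ℝ) ≤ (q:ℝ) := by exact_mod_cast (by omega : ⌈10 / ε⌉₊ ≤ q)
    have h10 : (10:ℝ) ≤ ε * q := by
      rw [div_le_iff₀ hε] at hceil
      calc (10:ℝ) ≤ ⌈10/ε⌉₊ * ε := hceil
      _ ≤ q * ε := mul_le_mul_of_nonneg_right hcB hε.le
      _ = ε * q := by ring
    have hq10R : (10:ℝ) ≤ (q:ℝ) := by exact_mod_cast hq10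
    have hm1 : 10 * ((q:ℝ) - 1) ≤ (ε * q) * ((q:ℝ) - 1) :=
      mul_le_mul_of_nonneg_right h10 (by linarith)
    have hm2 : ε * ((q:ℝ) * q - q) ≤ ε * n := mul_le_mul_of_nonneg_left hq2 hε.le
    have hm3 : (ε * q) * ((q:ℝ) - 1) = ε * ((q:ℝ) * q - q) := by ring
    linarith
  calc (1 - ε) * n = (n:ℝ) - ε * n := by ring
  _ ≤ (n:ℝ) - a := by linarith
  _ = ((n - a : ℕ) : ℝ) := hcast.symm
  _ ≤ _ := hc

set_option maxHeartbeats 1000000 in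
lemma freq_far (e e' : ℕ → Bool) {i₀ : ℕ} (hi₀ : e i₀ ≠ e' i₀) {ε : ℝ} (hε : 0 < ε) :
    ∃ᶠ n in Filter.atTop,
      ((({i : ℕ | i < n ∧ Metric.hausdorffDist (iterSet Fsig i (xseq e))
        (iterSet Fsig i (xseq e')) < 1}).ncard : ℝ) / n) ≤ ε := by
  rw [Filter.frequently_atTop]
  intro N₀
  set B := N₀ + ⌈5 / ε⌉₊ + 10 with hB
  set k := 2 * Nat.pair i₀ B with hk
  have hpB : B ≤ Nat.pair i₀ B := Nat.right_le_pair i₀ B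
  have hkq : k + 1 ≤ 5 ^ 2 ^ k := two_pow_le_q k
  set q := 5 ^ 2 ^ k with hq
  have hBq : B ≤ q := by omega
  have hqm : (5:ℕ) ^ 2 ^ (k+1) = q * q := q_sq k
  set P := (Wpref e k).length with hP
  set Q := (Wpref e' k).length with hQ
  have hPq : P ≤ 5 * q := Wpref_le_5q e k
  have hQq : Q ≤ 5 * q := Wpref_le_5q e' k
  have hkodd : k + 1 = 2 * Nat.pair i₀ B + 1 := rfl
  have hcdiff : mchoice e (k + 1) ≠ mchoice e' (k + 1) := by
    rw [hkodd, mchoice_odd, mchoice_odd]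
    exact hi₀
  have hP1 : 1 ≤ P := le_trans (by omega) (lt_Wpref_length e k)
  set a := max P Q with ha
  set n := min P Q + q * q with hn
  have hq10 : 10 ≤ q := by omega
  have hqq : 10 * q ≤ q * q := Nat.mul_le_mul_right q hq10
  have hNn : N₀ ≤ n := by omega
  refine ⟨n, hNn, ?_⟩
  have hsub : {i : ℕ | i < n ∧ Metric.hausdorffDist (iterSet Fsig i (xseq e))
      (iterSet Fsig i (xseq e')) < 1} ⊆ Set.Iio a := by
    intro i hi
    obtain ⟨hin, hd⟩ := hi
    by_contra hia
    rw [Set.mem_Iio, not_lt] at hia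
    have hi1 : 1 ≤ i := le_trans (le_trans hP1 (le_max_left P Q)) hia
    rw [iterSet_eq i hi1 (xseq e), iterSet_eq i hi1 (xseq e')] at hd
    have hne : (shiftS^[i] (xseq e)) 0 ≠ (shiftS^[i] (xseq e')) 0 := by
      rw [shiftS_iterate, shiftS_iterate]
      exact stage_far e e' k (0 + i) hcdiff (by omega) (by omega)
        (by rw [hqm]; omega) (by rw [hqm]; omega)
    exact absurd hd (not_lt.mpr (one_le_hd hne))
  have hcard : ({i : ℕ | i < n ∧ Metric.hausdorffDist (iterSet Fsig i (xseq e))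
      (iterSet Fsig i (xseq e')) < 1}).ncard ≤ a := by
    calc _ ≤ (Set.Iio a).ncard := Set.ncard_le_ncard hsub (Set.finite_Iio a)
    _ = a := ncard_Iio' a
  have hn0 : 0 < n := by omega
  have hn0R : (0:ℝ) < (n:ℝ) := by exact_mod_cast hn0
  rw [div_le_iff₀ hn0R]
  have hcR : (({i : ℕ | i < n ∧ Metric.hausdorffDist (iterSet Fsig i (xseq e))
      (iterSet Fsig i (xseq e')) < 1}).ncard : ℝ) ≤ (a:ℝ) := by exact_mod_cast hcard
  have haε : (a:ℝ) ≤ ε * n := by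
    have h5q : (a:ℝ) ≤ 5 * (q:ℝ) := by exact_mod_cast (by omega : a ≤ 5 * q)
    have hq2 : (q:ℝ) * q ≤ (n:ℝ) := by exact_mod_cast (by omega : q * q ≤ n)
    have hceil : 5 / ε ≤ ((⌈5 / ε⌉₊ : ℕ) : ℝ) := Nat.le_ceil _
    have hcB : ((⌈5 / ε⌉₊ : ℕ) : ℝ) ≤ (q:ℝ) := by exact_mod_cast (by omega : ⌈5 / ε⌉₊ ≤ q)
    have h5 : (5:ℝ) ≤ ε * q := by
      rw [div_le_iff₀ hε] at hceil
      calc (5:ℝ) ≤ ⌈5/ε⌉₊ * ε := hceil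
      _ ≤ q * ε := mul_le_mul_of_nonneg_right hcB hε.le
      _ = ε * q := by ring
    have hq10R : (10:ℝ) ≤ (q:ℝ) := by exact_mod_cast hq10
    have hm1 : 5 * (q:ℝ) ≤ (ε * q) * q := by
      have := mul_le_mul_of_nonneg_right h5 (by positivity : (0:ℝ) ≤ (q:ℝ))
      linarith
    have hm2 : ε * ((q:ℝ) * q) ≤ ε * n := mul_le_mul_of_nonneg_left hq2 hε.le
    have hm3 : (ε * q) * (q:ℝ) = ε * ((q:ℝ) * q) := by ring
    linarith
  linarith

end Freq

/-- Let `X = ω(u, σ)` and `F = {σ, f₀}` with `f₀ ≡ a = 000⋯`. The system `(X, F)` is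
Hausdorff metric distributionally chaotic: there is an uncountable `S ⊆ X` such that for any
distinct `x, y ∈ S`, `limsup_n (1/n)·#{0 ≤ i ≤ n-1 : d_H(F^i(x), F^i(y)) < t} = 1` for all
`t > 0`, and `liminf_n (1/n)·#{0 ≤ i ≤ n-1 : d_H(F^i(x), F^i(y)) < 1} = 0`. -/
theorem shift_system_distributionally_chaotic :
    ∃ S : Set Sig2, S ⊆ omegaLim useqS ∧ ¬ S.Countable ∧
      ∀ x ∈ S, ∀ y ∈ S, x ≠ y →
        (∀ t > (0 : ℝ),
          Filter.limsup (fun n : ℕ =>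
            (({i : ℕ | i < n ∧
              Metric.hausdorffDist (iterSet Fsig i x) (iterSet Fsig i y) < t}).ncard : ℝ) / n)
            Filter.atTop = 1) ∧
        Filter.liminf (fun n : ℕ =>
          (({i : ℕ | i < n ∧
            Metric.hausdorffDist (iterSet Fsig i x) (iterSet Fsig i y) < 1}).ncard : ℝ) / n)
          Filter.atTop = 0 := by
  refine ⟨Set.range xseq, ?_, ?_, ?_⟩
  · rintro x ⟨e, rfl⟩
    exact xseq_mem_omegaLim e
  · intro hc
    have hcnt : Countable (ℕ → Bool) := by
      have h1 : Countable ↥(Set.range xseq) := hc.to_subtype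
      exact Countable.of_equiv _ (Equiv.ofInjective xseq xseq_injective).symm
    obtain ⟨f, hf⟩ := exists_surjective_nat (ℕ → Bool)
    obtain ⟨n, hn⟩ := hf (fun m => !(f m m))
    have hcontra := congrFun hn n
    simp at hcontra
  · rintro x ⟨e, rfl⟩ y ⟨e', rfl⟩ hxy
    obtain ⟨i₀, hi₀⟩ : ∃ i, e i ≠ e' i := by
      by_contra hcq
      push_neg at hcq
      exact hxy (congrArg xseq (funext hcq))
    constructor
    · intro t ht
      have hb_le : Filter.IsBoundedUnder (· ≤ ·) Filter.atTop (fun n : ℕ =>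
          (({i : ℕ | i < n ∧
            Metric.hausdorffDist (iterSet Fsig i (xseq e)) (iterSet Fsig i (xseq e')) < t}).ncard
              : ℝ) / n) :=
        Filter.isBoundedUnder_of ⟨1, fun n => ratio_le_one n _⟩
      have hb_ge : Filter.IsBoundedUnder (· ≥ ·) Filter.atTop (fun n : ℕ =>
          (({i : ℕ | i < n ∧
            Metric.hausdorffDist (iterSet Fsig i (xseq e)) (iterSet Fsig i (xseq e')) < t}).ncard
              : ℝ) / n) :=
        Filter.isBoundedUnder_of ⟨0, fun n => ratio_nonneg _ n⟩
      apply le_antisymm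
      · exact Filter.limsup_le_of_le hb_ge.isCoboundedUnder_le
          (Filter.Eventually.of_forall fun n => ratio_le_one n _)
      · apply le_of_forall_sub_le
        intro ε hε
        exact Filter.le_limsup_of_frequently_le (freq_close e e' ht hε) hb_le
    · have hb_le : Filter.IsBoundedUnder (· ≤ ·) Filter.atTop (fun n : ℕ =>
          (({i : ℕ | i < n ∧
            Metric.hausdorffDist (iterSet Fsig i (xseq e)) (iterSet Fsig i (xseq e')) < 1}).ncard
              : ℝ) / n) :=
        Filter.isBoundedUnder_of ⟨1, fun n => ratio_le_one n _⟩
      have hb_ge : Filter.IsBoundedUnder (· ≥ ·) Filter.atTop (fun n : ℕ =>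
          (({i : ℕ | i < n ∧
            Metric.hausdorffDist (iterSet Fsig i (xseq e)) (iterSet Fsig i (xseq e')) < 1}).ncard
              : ℝ) / n) :=
        Filter.isBoundedUnder_of ⟨0, fun n => ratio_nonneg _ n⟩
      apply le_antisymm
      · apply le_of_forall_pos_le_add
        intro ε hε
        have h := Filter.liminf_le_of_frequently_le (freq_far e e' hi₀ hε) hb_ge
        simpa using h
      · exact Filter.le_liminf_of_le hb_le.isCoboundedUnder_ge
          (Filter.Eventually.of_forall fun n => ratio_nonneg _ n)
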